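/- Let τ > 0, let X be a separable reflexive real Banach space such that X and its dual X* are strictly convex, and let U be a real separable Hilbert space; let B : U → X be a bounded linear operator and R(t,s) ∈ L(X) (0 ≤ s ≤ t ≤ τ) a strongly continuous, uniformly bounded family. Let J : X → X* be a duality mapping, assumed bijective and demicontinuous (norm-to-weak continuous). Define B_τ : X* → X by B_τ x* = ∫₀^τ R(τ,t) B B* R(τ,t)* x* dt, and assume ⟨x*, B_τ x*⟩ > 0 for every nonzero x* ∈ X*. For x ∈ X and λ > 0 let z_λ ∈ X denote the unique solution of λz_λ + B_τ(J(z_λ)) = λx. Then ‖z_λ‖_X → 0 as λ → 0⁺. -/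

import Mathlib

open MeasureTheory
open scoped RealInnerProductSpace

private lemma measurable_of_inner_meas {α U : Type*} [MeasurableSpace α]
    [NormedAddCommGroup U] [InnerProductSpace ℝ U] [CompleteSpace U]
    [TopologicalSpace.SeparableSpace U] [MeasurableSpace U] [BorelSpace U]
    {f : α → U} (h : ∀ u : U, Measurable fun a => ⟪f a, u⟫) : Measurable f := by
  haveI : SecondCountableTopology U := UniformSpace.secondCountable_of_separable U
  obtain ⟨d, hd⟩ : ∃ u : ℕ → U, DenseRange u := TopologicalSpace.exists_dense_seq U
  set T : U → (ℕ → ℝ) := fun v k => ⟪v, d k⟫ with hT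
  have Tcont : Continuous T :=
    continuous_pi fun k => continuous_id.inner continuous_const
  have Tinj : Function.Injective T := by
    intro v w hvw
    apply ext_inner_right ℝ
    intro u
    have hS : IsClosed {u : U | ⟪v, u⟫ = ⟪w, u⟫} :=
      isClosed_eq (continuous_const.inner continuous_id) (continuous_const.inner continuous_id)
    have hsub : Set.range d ⊆ {u : U | ⟪v, u⟫ = ⟪w, u⟫} := by
      rintro _ ⟨k, rfl⟩
      exact congrFun hvw k
    exact hS.closure_subset_iff.2 hsub (hd u)
  have hemb : MeasurableEmbedding T := Tcont.measurableEmbedding Tinj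
  have hTf : Measurable (T ∘ f) := measurable_pi_iff.mpr fun k => h (d k)
  exact hemb.measurable_comp_iff.mp hTf

set_option maxHeartbeats 2000000

/-- with `z_λ` the unique solution of `λ z_λ + B_τ(J(z_λ)) = λ x`,
one has `‖z_λ‖ → 0` as `λ → 0⁺`. -/
theorem stmt_10
    {X U : Type*} [NormedAddCommGroup X] [NormedSpace ℝ X] [CompleteSpace X]
    [TopologicalSpace.SeparableSpace X]
    [StrictConvexSpace ℝ X] [StrictConvexSpace ℝ (StrongDual ℝ X)]
    [NormedAddCommGroup U] [InnerProductSpace ℝ U] [CompleteSpace U]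
    [TopologicalSpace.SeparableSpace U]
    -- X is reflexive
    (hrefl : Function.Surjective (NormedSpace.inclusionInDoubleDual ℝ X))
    (τ : ℝ) (hτ : 0 < τ)
    (B : U →L[ℝ] X)
    (R : ℝ → ℝ → X →L[ℝ] X)
    -- strong continuity of (t,s) ↦ R(t,s)x on the triangle 0 ≤ s ≤ t ≤ τ
    (hR_strong : ∀ x : X, ContinuousOn (fun p : ℝ × ℝ => R p.1 p.2 x)
      {p : ℝ × ℝ | 0 ≤ p.2 ∧ p.2 ≤ p.1 ∧ p.1 ≤ τ})
    -- uniform boundedness in operator norm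
    (MR : ℝ) (hMR : ∀ t s : ℝ, 0 ≤ s → s ≤ t → t ≤ τ → ‖R t s‖ ≤ MR)
    -- J is a duality mapping of X, bijective and demicontinuous
    (J : X → StrongDual ℝ X)
    (hJ_id : ∀ x : X, J x x = ‖x‖ ^ 2)
    (hJ_norm : ∀ x : X, ‖J x‖ = ‖x‖)
    (hJ_bij : Function.Bijective J)
    (hJ_demi : ∀ z : X, Continuous fun x : X => J x z)
    -- B* x* is the Riesz representative of u ↦ ⟨x*, Bu⟩
    (Bstar : StrongDual ℝ X → U)
    (hBstar : ∀ (φ : StrongDual ℝ X) (u : U), ⟪Bstar φ, u⟫ = φ (B u))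
    -- the controllability Gramian B_τ
    (Btau : StrongDual ℝ X → X)
    (hBtau : ∀ φ : StrongDual ℝ X,
      Btau φ = ∫ t in Set.Icc (0:ℝ) τ, R τ t (B (Bstar (φ.comp (R τ t)))))
    -- positivity of the Gramian
    (hpos : ∀ φ : StrongDual ℝ X, φ ≠ 0 → 0 < φ (Btau φ))
    (x : X) (z : ℝ → X)
    -- z lam is the solution of λ z_λ + B_τ(J(z_λ)) = λ x
    (hz : ∀ lam : ℝ, 0 < lam → lam • z lam + Btau (J (z lam)) = lam • x) :
    Filter.Tendsto (fun lam : ℝ => ‖z lam‖) (nhdsWithin 0 (Set.Ioi 0)) (nhds 0) := by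
  classical
  borelize U X
  haveI : SecondCountableTopology U := UniformSpace.secondCountable_of_separable U
  haveI : SecondCountableTopology X := UniformSpace.secondCountable_of_separable X
  set μ : Measure ℝ := volume.restrict (Set.Icc (0:ℝ) τ) with hμdef
  haveI : IsFiniteMeasure μ := by
    constructor
    rw [hμdef, Measure.restrict_apply_univ, Real.volume_Icc]
    exact ENNReal.ofReal_lt_top
  have hMR0 : 0 ≤ MR := le_trans (norm_nonneg _) (hMR τ τ hτ.le le_rfl le_rfl)
  -- the function g χ t = B* R(τ,t)* χ
  set g : StrongDual ℝ X → ℝ → U := fun χ t => Bstar (χ.comp (R τ t)) with hgdef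
  have hg_inner : ∀ (χ : StrongDual ℝ X) (t : ℝ) (u : U),
      ⟪g χ t, u⟫ = χ (R τ t (B u)) := fun χ t u => hBstar (χ.comp (R τ t)) u
  have hg_bound : ∀ (χ : StrongDual ℝ X), ∀ t ∈ Set.Icc (0:ℝ) τ,
      ‖g χ t‖ ≤ ‖χ‖ * (MR * ‖B‖) := by
    intro χ t ht
    have h1 : ‖g χ t‖ ^ 2 = χ (R τ t (B (g χ t))) := by
      rw [← hg_inner χ t (g χ t), real_inner_self_eq_norm_sq]
    have hRt : ‖R τ t‖ ≤ MR := hMR τ t ht.1 ht.2 le_rfl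
    have h2 : χ (R τ t (B (g χ t))) ≤ ‖χ‖ * (MR * (‖B‖ * ‖g χ t‖)) := by
      calc χ (R τ t (B (g χ t))) ≤ ‖χ (R τ t (B (g χ t)))‖ := le_abs_self _
        _ ≤ ‖χ‖ * ‖R τ t (B (g χ t))‖ := χ.le_opNorm _
        _ ≤ ‖χ‖ * (MR * (‖B‖ * ‖g χ t‖)) := by
            have h3 : ‖R τ t (B (g χ t))‖ ≤ MR * (‖B‖ * ‖g χ t‖) := by
              calc ‖R τ t (B (g χ t))‖ ≤ ‖R τ t‖ * ‖B (g χ t)‖ := (R τ t).le_opNorm _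
                _ ≤ MR * (‖B‖ * ‖g χ t‖) :=
                    mul_le_mul hRt (B.le_opNorm _) (norm_nonneg _) hMR0
            exact mul_le_mul_of_nonneg_left h3 (norm_nonneg χ)
    nlinarith [norm_nonneg (g χ t), norm_nonneg χ, norm_nonneg B,
      mul_nonneg (norm_nonneg χ) (mul_nonneg hMR0 (norm_nonneg B))]
  -- clamp function
  set c : ℝ → ℝ := fun t => max 0 (min t τ) with hcdef
  have hc_cont : Continuous c := continuous_const.max (continuous_id.min continuous_const)
  have hc_mem : ∀ t, c t ∈ Set.Icc (0:ℝ) τ := fun t =>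
    ⟨le_max_left _ _, max_le hτ.le (min_le_right _ _)⟩
  have hc_eq : ∀ t ∈ Set.Icc (0:ℝ) τ, c t = t := by
    intro t ht
    rw [hcdef]
    simp only [min_eq_left ht.2]
    exact max_eq_right ht.1
  have hRc_cont : ∀ v : X, Continuous fun t => R τ (c t) v := by
    intro v
    have h2 : Continuous fun t : ℝ => ((τ, c t) : ℝ × ℝ) := continuous_const.prodMk hc_cont
    have := (hR_strong v).comp_continuous h2
      (fun t => ⟨(hc_mem t).1, (hc_mem t).2, le_rfl⟩)
    exact this
  have hg'_meas : ∀ χ : StrongDual ℝ X, Measurable fun t => g χ (c t) := by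
    intro χ
    apply measurable_of_inner_meas
    intro u
    have hcont : Continuous fun t => χ (R τ (c t) (B u)) := χ.continuous.comp (hRc_cont (B u))
    simpa only [hg_inner] using hcont.measurable
  have hg_aesm : ∀ χ : StrongDual ℝ X, AEStronglyMeasurable (g χ) μ := by
    intro χ
    have h1 : AEStronglyMeasurable (fun t => g χ (c t)) μ :=
      (hg'_meas χ).stronglyMeasurable.aestronglyMeasurable
    refine h1.congr ?_
    rw [hμdef]
    filter_upwards [ae_restrict_mem measurableSet_Icc] with t ht
    rw [hc_eq t ht]
  -- the X-valued integrand
  set F : StrongDual ℝ X → ℝ → X := fun χ t => R τ t (B (g χ t)) with hFdef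
  have hF_aesm : ∀ χ : StrongDual ℝ X, AEStronglyMeasurable (F χ) μ := by
    intro χ
    have sm : StronglyMeasurable fun t => g χ (c t) := (hg'_meas χ).stronglyMeasurable
    have happrox : ∀ n, Measurable fun t => R τ (c t) (B (sm.approx n t)) := by
      intro n
      have heq : ∀ t, R τ (c t) (B (sm.approx n t)) =
          ∑ v ∈ (sm.approx n).range,
            Set.indicator ((sm.approx n) ⁻¹' {v}) (fun s => R τ (c s) (B v)) t := by
        intro t
        rw [Finset.sum_eq_single_of_mem (sm.approx n t)
          (SimpleFunc.mem_range_self _ t)]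
        · rw [Set.indicator_of_mem (by simp : t ∈ (sm.approx n) ⁻¹' {sm.approx n t})]
        · intro v _ hne
          exact Set.indicator_of_notMem
            (by simp only [Set.mem_preimage, Set.mem_singleton_iff]; exact fun h => hne h.symm) _
      rw [funext heq]
      refine Finset.measurable_sum _ fun v _ => ?_
      exact (Measurable.indicator
        ((hRc_cont (B v)).measurable) ((sm.approx n).measurableSet_fiber v))
    have hF'_meas : Measurable fun t => R τ (c t) (B (g χ (c t))) := by
      refine measurable_of_tendsto_metrizable (fun n => happrox n) ?_
      rw [tendsto_pi_nhds]
      intro t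
      have h1 : Filter.Tendsto (fun n => sm.approx n t) Filter.atTop (nhds (g χ (c t))) :=
        sm.tendsto_approx t
      have hco : Continuous fun v : U => R τ (c t) (B v) :=
        (R τ (c t)).continuous.comp B.continuous
      exact (hco.tendsto _).comp h1
    have h1 : AEStronglyMeasurable (fun t => R τ (c t) (B (g χ (c t)))) μ :=
      hF'_meas.stronglyMeasurable.aestronglyMeasurable
    refine h1.congr ?_
    rw [hμdef]
    filter_upwards [ae_restrict_mem measurableSet_Icc] with t ht
    rw [hFdef, hc_eq t ht]
  have hF_int : ∀ χ : StrongDual ℝ X, Integrable (F χ) μ := by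
    intro χ
    refine ⟨hF_aesm χ, HasFiniteIntegral.of_bounded
      (C := MR * (‖B‖ * (‖χ‖ * (MR * ‖B‖)))) ?_⟩
    rw [hμdef]
    filter_upwards [ae_restrict_mem measurableSet_Icc] with t ht
    calc ‖F χ t‖ ≤ ‖R τ t‖ * ‖B (g χ t)‖ := (R τ t).le_opNorm _
      _ ≤ MR * (‖B‖ * (‖χ‖ * (MR * ‖B‖))) := by
          have h1 : ‖B (g χ t)‖ ≤ ‖B‖ * (‖χ‖ * (MR * ‖B‖)) :=
            le_trans (B.le_opNorm _)
              (mul_le_mul_of_nonneg_left (hg_bound χ t ht) (norm_nonneg B))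
          exact mul_le_mul (hMR τ t ht.1 ht.2 le_rfl) h1 (norm_nonneg _) hMR0
  have hinner_int : ∀ χ ψ : StrongDual ℝ X,
      Integrable (fun t => ⟪g χ t, g ψ t⟫) μ := by
    intro χ ψ
    refine ⟨(hg_aesm χ).inner (hg_aesm ψ), HasFiniteIntegral.of_bounded
      (C := (‖χ‖ * (MR * ‖B‖)) * (‖ψ‖ * (MR * ‖B‖))) ?_⟩
    rw [hμdef]
    filter_upwards [ae_restrict_mem measurableSet_Icc] with t ht
    calc ‖⟪g χ t, g ψ t⟫‖ ≤ ‖g χ t‖ * ‖g ψ t‖ := norm_inner_le_norm _ _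
      _ ≤ _ := mul_le_mul (hg_bound χ t ht) (hg_bound ψ t ht) (norm_nonneg _) (by positivity)
  -- the Gramian identity
  have hI : ∀ χ ψ : StrongDual ℝ X,
      χ (Btau ψ) = ∫ t, ⟪g χ t, g ψ t⟫ ∂μ := by
    intro χ ψ
    have h1 : χ (Btau ψ) = ∫ t, χ (F ψ t) ∂μ := by
      rw [hBtau ψ]
      exact (χ.integral_comp_comm (hF_int ψ)).symm
    rw [h1]
    refine integral_congr_ae (Filter.Eventually.of_forall fun t => ?_)
    exact (hg_inner χ t (g ψ t)).symm
  have hSelf : ∀ χ : StrongDual ℝ X,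
      χ (Btau χ) = ∫ t, ⟪g χ t, g χ t⟫ ∂μ := fun χ => hI χ χ
  have hSym : ∀ χ ψ : StrongDual ℝ X, χ (Btau ψ) = ψ (Btau χ) := by
    intro χ ψ
    rw [hI χ ψ, hI ψ χ]
    exact integral_congr_ae (Filter.Eventually.of_forall fun t => real_inner_comm _ _)
  have hAMGM : ∀ χ ψ : StrongDual ℝ X,
      χ (Btau ψ) ≤ (1/2) * χ (Btau χ) + (1/2) * ψ (Btau ψ) := by
    intro χ ψ
    rw [hI χ ψ, hSelf χ, hSelf ψ]
    have h1 : ∫ t, ⟪g χ t, g ψ t⟫ ∂μ ≤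
        ∫ t, ((1/2) * ⟪g χ t, g χ t⟫ + (1/2) * ⟪g ψ t, g ψ t⟫) ∂μ := by
      refine integral_mono (hinner_int χ ψ)
        (((hinner_int χ χ).const_mul _).add ((hinner_int ψ ψ).const_mul _)) fun t => ?_
      have h2 : ⟪g χ t, g ψ t⟫ ≤ ‖g χ t‖ * ‖g ψ t‖ := real_inner_le_norm _ _
      have h3 : ⟪g χ t, g χ t⟫ = ‖g χ t‖ ^ 2 := real_inner_self_eq_norm_sq _
      have h4 : ⟪g ψ t, g ψ t⟫ = ‖g ψ t‖ ^ 2 := real_inner_self_eq_norm_sq _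
      rw [h3, h4]
      nlinarith [sq_nonneg (‖g χ t‖ - ‖g ψ t‖)]
    rw [integral_add ((hinner_int χ χ).const_mul _) ((hinner_int ψ ψ).const_mul _),
      integral_const_mul, integral_const_mul] at h1
    exact h1
  -- positivity
  have hBtau_nonneg : ∀ χ : StrongDual ℝ X, 0 ≤ χ (Btau χ) := by
    intro χ
    rcases eq_or_ne χ 0 with rfl | hχ
    · simp
    · exact (hpos χ hχ).le
  -- consequences of the equation
  have hkey : ∀ lam : ℝ, 0 < lam →
      lam * ‖z lam‖ ^ 2 + (J (z lam)) (Btau (J (z lam))) = lam * (J (z lam)) x := by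
    intro lam hlam
    have h1 := congrArg (fun v => (J (z lam)) v) (hz lam hlam)
    simpa [map_add, _root_.map_smul, hJ_id, smul_eq_mul] using h1
  have hz_le : ∀ lam : ℝ, 0 < lam → ‖z lam‖ ^ 2 ≤ (J (z lam)) x := by
    intro lam hlam
    have h1 := hkey lam hlam
    have h2 := hBtau_nonneg (J (z lam))
    nlinarith
  have hJx_le : ∀ lam : ℝ, 0 < lam → (J (z lam)) x ≤ ‖z lam‖ * ‖x‖ := by
    intro lam hlam
    calc (J (z lam)) x ≤ ‖(J (z lam)) x‖ := le_abs_self _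
      _ ≤ ‖J (z lam)‖ * ‖x‖ := (J (z lam)).le_opNorm x
      _ = ‖z lam‖ * ‖x‖ := by rw [hJ_norm]
  have hz_norm : ∀ lam : ℝ, 0 < lam → ‖z lam‖ ≤ ‖x‖ := by
    intro lam hlam
    have h1 := hz_le lam hlam
    have h2 := hJx_le lam hlam
    nlinarith [norm_nonneg (z lam), norm_nonneg x]
  have ha_le : ∀ lam : ℝ, 0 < lam →
      (J (z lam)) (Btau (J (z lam))) ≤ lam * ‖x‖ ^ 2 := by
    intro lam hlam
    have h1 := hkey lam hlam
    have h2 := hJx_le lam hlam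
    have h3 := hz_norm lam hlam
    have h4 : (J (z lam)) x ≤ ‖x‖ ^ 2 := by nlinarith [norm_nonneg x]
    nlinarith [norm_nonneg (z lam)]
  -- suppose not
  by_contra hcon
  obtain ⟨ε, hε, hfreq⟩ : ∃ ε > 0, ∃ᶠ lam in nhdsWithin 0 (Set.Ioi 0), ε ≤ ‖z lam‖ := by
    by_contra h
    push_neg at h
    apply hcon
    rw [Metric.tendsto_nhds]
    intro ε hε
    have h2 := h ε hε
    filter_upwards [h2] with lam hlam
    rw [Real.dist_eq, sub_zero, abs_of_nonneg (norm_nonneg _)]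
    exact hlam
  have hsel : ∀ n : ℕ, ∃ lam, lam ∈ Set.Ioo (0:ℝ) (1/(n+1)) ∧ ε ≤ ‖z lam‖ := by
    intro n
    exact ((nhdsGT_basis (0:ℝ)).frequently_iff.mp hfreq) (1/(n+1)) (by positivity)
  choose l hl hlz using hsel
  have hl0 : ∀ n, 0 < l n := fun n => (hl n).1
  have hltendsto : Filter.Tendsto l Filter.atTop (nhds 0) := by
    refine tendsto_of_tendsto_of_tendsto_of_le_of_le tendsto_const_nhds
      tendsto_one_div_add_atTop_nhds_zero_nat (fun n => (hl0 n).le) (fun n => (hl n).2.le)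
  -- ultrafilter and weak-* cluster point
  set φfun : ℕ → WeakDual ℝ X := fun n => StrongDual.toWeakDual (J (z (l n))) with hφfun
  set UF : Ultrafilter ℕ := Ultrafilter.of Filter.atTop with hUFdef
  have hUFle : (UF : Filter ℕ) ≤ Filter.atTop := Ultrafilter.of_le _
  have hφ_mem : ∀ n, φfun n ∈ (WeakDual.toStrongDual ⁻¹' Metric.closedBall 0 ‖x‖) := by
    intro n
    simp only [Set.mem_preimage, Metric.mem_closedBall, dist_zero_right]
    show ‖J (z (l n))‖ ≤ ‖x‖
    rw [hJ_norm]
    exact hz_norm _ (hl0 n)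
  obtain ⟨philim, hphilimmem, hphilim⟩ :=
    (WeakDual.isCompact_closedBall (𝕜 := ℝ) (E := X) 0 ‖x‖).ultrafilter_le_nhds
      (UF.map φfun) (by
        rw [Ultrafilter.coe_map, Filter.le_principal_iff, Filter.mem_map]
        exact Filter.univ_mem' hφ_mem)
  have hTend : Filter.Tendsto φfun UF (nhds philim) := by
    rwa [Filter.Tendsto, ← Ultrafilter.coe_map]
  have hEval : ∀ y : X, Filter.Tendsto (fun n => (J (z (l n))) y) UF (nhds (philim y)) :=
    fun y => ((WeakDual.eval_continuous y).tendsto philim).comp hTend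
  set psilim : StrongDual ℝ X := WeakDual.toStrongDual philim with hpsilimdef
  have hpsilimapp : ∀ y : X, psilim y = philim y := fun y => rfl
  -- a_n → 0
  have ha0 : Filter.Tendsto (fun n => (J (z (l n))) (Btau (J (z (l n)))))
      Filter.atTop (nhds 0) := by
    have hub : Filter.Tendsto (fun n => l n * ‖x‖ ^ 2) Filter.atTop (nhds 0) := by
      simpa using hltendsto.mul_const (‖x‖ ^ 2)
    exact tendsto_of_tendsto_of_tendsto_of_le_of_le tendsto_const_nhds hub
      (fun n => hBtau_nonneg _) (fun n => ha_le _ (hl0 n))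
  -- A = psilim (Btau psilim) satisfies A ≤ A/2 hence A = 0
  have hA0 : psilim (Btau psilim) = 0 := by
    have h2 : Filter.Tendsto (fun n => psilim (Btau (J (z (l n))))) UF (nhds (psilim (Btau psilim))) := by
      have h3 := hEval (Btau psilim)
      have h4 : (fun n => (J (z (l n))) (Btau psilim)) = fun n => psilim (Btau (J (z (l n)))) :=
        funext fun n => (hSym psilim (J (z (l n)))).symm
      rw [h4] at h3
      exact h3
    have h5 : Filter.Tendsto (fun n => (1:ℝ)/2 * psilim (Btau psilim)
        + 1/2 * (J (z (l n))) (Btau (J (z (l n))))) UF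
        (nhds (1/2 * psilim (Btau psilim) + 1/2 * 0)) :=
      tendsto_const_nhds.add ((ha0.mono_left hUFle).const_mul _)
    have h6 : psilim (Btau psilim) ≤ 1/2 * psilim (Btau psilim) + 1/2 * 0 :=
      le_of_tendsto_of_tendsto' h2 h5 (fun n => hAMGM psilim (J (z (l n))))
    have h7 := hBtau_nonneg psilim
    linarith
  have hψ0 : psilim = 0 := by
    by_contra hne
    exact absurd hA0 (ne_of_gt (hpos psilim hne))
  -- contradiction
  have hfin : Filter.Tendsto (fun n => (J (z (l n))) x) UF (nhds 0) := by
    have := hEval x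
    rw [← hpsilimapp x, hψ0] at this
    simpa using this
  have hfinal : ε ^ 2 ≤ 0 := by
    refine ge_of_tendsto hfin (Filter.Eventually.of_forall fun n => ?_)
    calc ε ^ 2 ≤ ‖z (l n)‖ ^ 2 := by
          have := hlz n
          nlinarith [hε.le]
      _ ≤ (J (z (l n))) x := hz_le _ (hl0 n)
  nlinarith [hε]
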